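/- Let A be a unital complex Banach algebra and let C : ℝ → A be a cosine family, i.e. C(0) = 1 and C(t+s) + C(t−s) = 2·C(t)·C(s) for all s, t ∈ ℝ. Suppose that for some s ∈ ℝ one has ‖C(2s) − 1‖ ≤ 2 and ρ(C(s) − 1) < 1, where ρ is the spectral radius. Then C(s) = √(1 − (1 − C(2s))/2), where for x ∈ A with ‖x‖ ≤ 1 the square root is defined by the binomial series √(1−x) := ∑_{n=0}^∞ binom(1/2, n)·(−1)^n·x^n with binom(1/2, n) = (1/2)(1/2 − 1)⋯(1/2 − n + 1)/n!. -/

import Mathlib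

open scoped Nat ENNReal

/-- The generalized binomial coefficient `binom (1/2) n`, i.e. the `n`-th Taylor
coefficient of `z ↦ √(1-z)` at `0` up to the sign `(-1)^n`. -/
noncomputable def binomHalf (n : ℕ) : ℝ :=
  (∏ i ∈ Finset.range n, ((1 : ℝ) / 2 - i)) / n !

namespace EsterleAux

/-- The signed coefficient of the series for `√(1-x)`. -/
noncomputable def c (n : ℕ) : ℝ := binomHalf n * (-1) ^ n

lemma c_zero : c 0 = 1 := by simp [c, binomHalf]

lemma binomHalf_succ (n : ℕ) :
    ((n : ℝ) + 1) * binomHalf (n + 1) = (1 / 2 - n) * binomHalf n := by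
  unfold binomHalf
  rw [Finset.prod_range_succ, Nat.factorial_succ]
  have h1 : (n ! : ℝ) ≠ 0 := by exact_mod_cast n.factorial_ne_zero
  push_cast
  field_simp

lemma c_succ (n : ℕ) : ((n : ℝ) + 1) * c (n + 1) = ((n : ℝ) - 1 / 2) * c n := by
  unfold c
  linear_combination (-(-1:ℝ)^n) * binomHalf_succ n

lemma c_one : c 1 = -(1 / 2) := by
  have := c_succ 0
  rw [c_zero] at this
  push_cast at this
  linarith

lemma c_nonpos (n : ℕ) : c (n + 1) ≤ 0 := by
  induction n with
  | zero => rw [c_one]; norm_num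
  | succ m ih =>
      have h := c_succ (m + 1)
      push_cast at h
      have h1 : (0 : ℝ) < (m : ℝ) + 1 + 1 := by positivity
      have hm : (0 : ℝ) ≤ (m : ℝ) := Nat.cast_nonneg m
      have h2 : ((m:ℝ) + 1 - 1/2) * c (m+1) ≤ 0 :=
        mul_nonpos_of_nonneg_of_nonpos (by linarith) ih
      nlinarith [h, h2, h1]

lemma sum_c (N : ℕ) :
    ∑ n ∈ Finset.range (N + 1), c n = -(2 * ((N : ℝ) + 1)) * c (N + 1) := by
  induction N with
  | zero =>
      simp [c_zero, c_one]
  | succ K ih =>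
      rw [Finset.sum_range_succ, ih]
      have h := c_succ (K + 1)
      push_cast at h ⊢
      linarith

lemma sum_c_nonneg (N : ℕ) : 0 ≤ ∑ n ∈ Finset.range (N + 1), c n := by
  rw [sum_c]
  have := c_nonpos N
  nlinarith [c_nonpos N]

lemma sum_abs_c_le (N : ℕ) : ∑ n ∈ Finset.range N, |c n| ≤ 2 := by
  have key : ∀ n, |c n| + c n = if n = 0 then 2 else 0 := by
    intro n
    cases n with
    | zero => norm_num [c_zero]
    | succ m =>
        have := c_nonpos m
        rw [abs_of_nonpos this]
        simp
  have hsum : ∑ n ∈ Finset.range N, (|c n| + c n) ≤ 2 := by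
    rw [Finset.sum_congr rfl (fun n _ => key n)]
    rw [Finset.sum_ite_eq' (Finset.range N) 0 (fun _ => (2:ℝ))]
    split <;> norm_num
  have hnn : 0 ≤ ∑ n ∈ Finset.range N, c n := by
    cases N with
    | zero => simp
    | succ K => exact sum_c_nonneg K
  rw [Finset.sum_add_distrib] at hsum
  linarith

lemma summable_abs_c : Summable (fun n => |c n|) :=
  summable_of_sum_range_le (fun n => abs_nonneg _) sum_abs_c_le

lemma sum_abs_c_succ_le (N : ℕ) : ∑ n ∈ Finset.range N, |c (n + 1)| ≤ 1 := by
  have h1 : ∀ n, |c (n + 1)| = -c (n + 1) := fun n => abs_of_nonpos (c_nonpos n)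
  calc ∑ n ∈ Finset.range N, |c (n + 1)|
      = -∑ n ∈ Finset.range N, c (n + 1) := by
        rw [← Finset.sum_neg_distrib]
        exact Finset.sum_congr rfl fun n _ => h1 n
    _ ≤ 1 := by
        have h2 : ∑ n ∈ Finset.range (N + 1), c n
            = (∑ n ∈ Finset.range N, c (n + 1)) + c 0 := Finset.sum_range_succ' c N
        have h3 := sum_c_nonneg N
        rw [c_zero] at h2
        linarith [h3, h2]

/-- The convolution of `c` with itself. -/
noncomputable def cc (n : ℕ) : ℝ := ∑ k ∈ Finset.range (n + 1), c k * c (n - k)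

lemma cc_zero : cc 0 = 1 := by simp [cc, c_zero]

lemma cc_one : cc 1 = -1 := by
  simp [cc, Finset.sum_range_succ, c_zero, c_one]
  norm_num


/-- Auxiliary sum `S m = ∑_{k ≤ m} k * c k * c (m-k)`. -/
noncomputable def S (m : ℕ) : ℝ := ∑ k ∈ Finset.range (m + 1), (k : ℝ) * (c k * c (m - k))

lemma S_reflect (m : ℕ) :
    ∑ k ∈ Finset.range (m + 1), ((m - k : ℕ) : ℝ) * (c k * c (m - k)) = S m := by
  rw [← Finset.sum_range_reflect (fun k => ((m - k : ℕ) : ℝ) * (c k * c (m - k))) (m + 1)]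
  apply Finset.sum_congr rfl
  intro k hk
  have hk' : k ≤ m := Nat.lt_succ_iff.mp (Finset.mem_range.mp hk)
  have h1 : m + 1 - 1 - k = m - k := by omega
  have h2 : m - (m - k) = k := by omega
  simp only [h1, h2]
  ring

lemma two_S (m : ℕ) : 2 * S m = (m : ℝ) * cc m := by
  rw [two_mul]
  nth_rewrite 1 [← S_reflect m]
  rw [S, ← Finset.sum_add_distrib, cc, Finset.mul_sum]
  apply Finset.sum_congr rfl
  intro k hk
  have hk' : k ≤ m := Nat.lt_succ_iff.mp (Finset.mem_range.mp hk)
  rw [Nat.cast_sub hk']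
  ring

lemma S_succ (n : ℕ) :
    S (n + 1) = ∑ j ∈ Finset.range (n + 1), ((j : ℝ) - 1 / 2) * (c j * c (n - j)) := by
  rw [S, Finset.sum_range_succ']
  simp only [Nat.cast_zero, zero_mul, add_zero]
  apply Finset.sum_congr rfl
  intro j hj
  have h1 : n + 1 - (j + 1) = n - j := by omega
  rw [h1]
  push_cast
  linear_combination c (n - j) * c_succ j

lemma cc_rec (n : ℕ) : ((n : ℝ) + 1) * cc (n + 1) = ((n : ℝ) - 1) * cc n := by
  have h1 : ((n : ℝ) + 1) * cc (n + 1)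
      = ∑ k ∈ Finset.range (n + 1 + 1), ((n : ℝ) + 1) * (c k * c (n + 1 - k)) := by
    rw [cc, Finset.mul_sum]
  have h2 : ∑ k ∈ Finset.range (n + 1 + 1), ((n : ℝ) + 1) * (c k * c (n + 1 - k))
      = S (n + 1) + ∑ k ∈ Finset.range (n + 1 + 1),
          ((n + 1 - k : ℕ) : ℝ) * (c k * c (n + 1 - k)) := by
    rw [S, ← Finset.sum_add_distrib]
    apply Finset.sum_congr rfl
    intro k hk
    have hk' : k ≤ n + 1 := Nat.lt_succ_iff.mp (Finset.mem_range.mp hk)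
    rw [Nat.cast_sub hk']
    push_cast
    ring
  have h3 : ∑ j ∈ Finset.range (n + 1), ((j : ℝ) - 1 / 2) * (c j * c (n - j))
      = S n - (1 / 2) * cc n := by
    rw [S, cc, Finset.mul_sum, ← Finset.sum_sub_distrib]
    apply Finset.sum_congr rfl
    intros
    ring
  rw [h1, h2, S_reflect, S_succ, h3]
  have h4 := two_S n
  linarith

lemma cc_eq_zero {n : ℕ} (h : 2 ≤ n) : cc n = 0 := by
  induction n, h using Nat.le_induction with
  | base =>
      have h := cc_rec 1
      rw [cc_one] at h
      push_cast at h
      linarith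
  | succ m hm ih =>
      have h := cc_rec m
      rw [ih] at h
      have : (0:ℝ) < (m:ℝ) + 1 := by positivity
      nlinarith

end EsterleAux

/-- The square root `√(1-x)` defined by the binomial series, for `x` in a
unital complex Banach algebra with `‖x‖ ≤ 1`. -/
noncomputable def sqrtOneSub {A : Type*} [NormedRing A] [NormedAlgebra ℂ A]
    [CompleteSpace A] (x : A) : A :=
  ∑' n : ℕ, (((binomHalf n * (-1) ^ n : ℝ) : ℂ)) • x ^ n

section helpers

lemma norm_pow_le_one' {A : Type*} [NormedRing A] [NormOneClass A] {z : A} (h : ‖z‖ ≤ 1) :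
    ∀ n, ‖z ^ n‖ ≤ 1
  | 0 => by simp
  | (n + 1) => by
      rw [pow_succ]
      calc ‖z ^ n * z‖ ≤ ‖z ^ n‖ * ‖z‖ := norm_mul_le _ _
        _ ≤ 1 := by nlinarith [norm_nonneg (z ^ n), norm_nonneg z, norm_pow_le_one' h n]

end helpers

set_option maxHeartbeats 2000000 in
/-- **Esterle's lemma.** If `C` is a cosine family in a unital complex Banach
algebra with `‖C(2s) - 1‖ ≤ 2` and `ρ(C(s) - 1) < 1`, then
`C(s) = √(1 - (1 - C(2s))/2)`. -/
theorem cosine_sqrt_lemma {A : Type*} [NormedRing A] [NormedAlgebra ℂ A]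
    [NormOneClass A] [CompleteSpace A] (C : ℝ → A)
    (hC0 : C 0 = 1)
    (hC : ∀ s t : ℝ, C (t + s) + C (t - s) = 2 * (C t * C s))
    (s : ℝ) (h2s : ‖C (2 * s) - 1‖ ≤ 2)
    (hρ : spectralRadius ℂ (C s - 1) < 1) :
    C s = sqrtOneSub (((2 : ℂ)⁻¹) • (1 - C (2 * s))) := by
  classical
  set a : A := C s with ha
  set x : A := (2 : ℂ)⁻¹ • (1 - C (2 * s)) with hxdef
  have two_smul' : ∀ z : A, (2 : ℂ) • z = 2 * z := fun z => by
    rw [Algebra.smul_def, map_ofNat]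
  -- Step 1: the cosine functional equation gives `a * a = 1 - x`.
  have h1 : C (2 * s) + 1 = 2 * (a * a) := by
    have h := hC s s
    rw [← two_mul, sub_self, hC0] at h
    exact h
  have hxa : x = 1 - a * a := by
    have e0 : C (2 * s) = 2 * (a * a) - 1 := eq_sub_of_add_eq h1
    have e1 : (1 : A) - C (2 * s) = (2 : ℂ) • (1 - a * a) := by
      rw [two_smul', e0]; noncomm_ring
    rw [hxdef, e1, smul_smul]
    norm_num
  have hsq : a * a = 1 - x := by rw [hxa]; noncomm_ring
  have hxnorm : ‖x‖ ≤ 1 := by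
    rw [hxdef, norm_smul, ← norm_neg (1 - C (2 * s)), neg_sub]
    have : ‖(2 : ℂ)⁻¹‖ = 2⁻¹ := by
      rw [norm_inv]; norm_num
    rw [this]
    linarith
  have hxpow : ∀ n, ‖x ^ n‖ ≤ 1 := norm_pow_le_one' hxnorm
  -- The series defining `y = sqrtOneSub x`.
  set f : ℕ → A := fun n => ((EsterleAux.c n : ℝ) : ℂ) • x ^ n with hfdef
  set y : A := sqrtOneSub x with hydef
  have hy : y = ∑' n, f n := rfl
  have hfn : ∀ n, ‖f n‖ ≤ |EsterleAux.c n| := by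
    intro n
    rw [hfdef]
    simp only
    rw [norm_smul, Complex.norm_real, Real.norm_eq_abs]
    calc |EsterleAux.c n| * ‖x ^ n‖ ≤ |EsterleAux.c n| * 1 :=
          mul_le_mul_of_nonneg_left (hxpow n) (abs_nonneg _)
      _ = |EsterleAux.c n| := mul_one _
  have hfs : Summable (fun n => ‖f n‖) :=
    Summable.of_nonneg_of_le (fun n => norm_nonneg _) hfn EsterleAux.summable_abs_c
  -- Cauchy product: `y * y = 1 - x`.
  have hinner : ∀ n, ∑ k ∈ Finset.range (n + 1), f k * f (n - k)
      = ((EsterleAux.cc n : ℝ) : ℂ) • x ^ n := by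
    intro n
    rw [EsterleAux.cc, Complex.ofReal_sum, Finset.sum_smul]
    apply Finset.sum_congr rfl
    intro k hk
    have hk' : k ≤ n := Nat.lt_succ_iff.mp (Finset.mem_range.mp hk)
    rw [hfdef]
    simp only
    rw [smul_mul_smul_comm, ← pow_add, Nat.add_sub_cancel' hk', ← Complex.ofReal_mul]
  have hyy : y * y = 1 - x := by
    rw [hy, tsum_mul_tsum_eq_tsum_sum_range_of_summable_norm hfs hfs]
    rw [tsum_eq_sum (s := ({0, 1} : Finset ℕ))
      (fun n hn => by
        rw [hinner n, EsterleAux.cc_eq_zero (by simp at hn; omega)]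
        simp)]
    rw [Finset.sum_insert (by norm_num), Finset.sum_singleton, hinner 0, hinner 1,
      EsterleAux.cc_zero, EsterleAux.cc_one]
    simp [sub_eq_add_neg]
  have hsqy : y * y = a * a := by rw [hyy, hsq]
  -- Commutation relations.
  have hax : a * x = x * a := by rw [hxa]; noncomm_ring
  have hcax : Commute a x := hax
  have haxn : ∀ n, a * x ^ n = x ^ n * a := fun n => (hcax.pow_right n).eq
  have hay : a * y = y * a := by
    rw [hy]
    calc a * ∑' n, f n = ∑' n, a * f n := (Summable.tsum_mul_left a hfs.of_norm).symm
      _ = ∑' n, f n * a := by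
          apply tsum_congr
          intro n
          rw [hfdef]
          simp only
          rw [mul_smul_comm, smul_mul_assoc, haxn n]
      _ = (∑' n, f n) * a := Summable.tsum_mul_right a hfs.of_norm
  -- Norm bound `‖y - 1‖ ≤ 1`.
  have hf0 : f 0 = 1 := by
    rw [hfdef]; simp [EsterleAux.c_zero]
  have hshift : Summable fun n => ‖f (n + 1)‖ := (summable_nat_add_iff 1).mpr hfs
  have hy1 : y - 1 = ∑' n, f (n + 1) := by
    rw [hy, Summable.tsum_eq_zero_add hfs.of_norm, hf0]
    abel
  have hvnorm : ‖y - 1‖ ≤ 1 := by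
    rw [hy1]
    calc ‖∑' n, f (n + 1)‖ ≤ ∑' n, ‖f (n + 1)‖ := norm_tsum_le_tsum_norm hshift
      _ ≤ ∑' n, |EsterleAux.c (n + 1)| :=
          Summable.tsum_le_tsum (fun n => hfn (n + 1)) hshift
            ((summable_nat_add_iff 1).mpr EsterleAux.summable_abs_c)
      _ ≤ 1 := Real.tsum_le_of_sum_range_le (fun n => abs_nonneg _)
            EsterleAux.sum_abs_c_succ_le
  -- Spectral radius bound on powers of `u = a - 1`.
  set u : A := a - 1 with hudef
  obtain ⟨r, hr1, hr2⟩ := ENNReal.lt_iff_exists_nnreal_btwn.mp hρ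
  set r' : ℝ := (r : ℝ) with hr'def
  have hr'0 : 0 < r' := by
    have h0 : (0 : ℝ≥0∞) < (r : ℝ≥0∞) := lt_of_le_of_lt zero_le hr1
    exact_mod_cast h0
  have hr'1 : r' < 1 := by exact_mod_cast hr2
  have hG := spectrum.pow_nnnorm_pow_one_div_tendsto_nhds_spectralRadius u
  have hev : ∀ᶠ (n : ℕ) in Filter.atTop, (‖u ^ n‖₊ : ℝ≥0∞) ^ (1 / (n : ℝ)) < (r : ℝ≥0∞) :=
    hG.eventually_lt_const hr1
  obtain ⟨N₀, hN₀⟩ := Filter.eventually_atTop.mp hev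
  set N : ℕ := max N₀ 1 with hNdef
  have hpowN : ∀ n, N ≤ n → ‖u ^ n‖ ≤ r' ^ n := by
    intro n hn
    have hn1 : 1 ≤ n := le_trans (le_max_right _ _) hn
    have h := hN₀ n (le_trans (le_max_left _ _) hn)
    have hnne : (n : ℝ) ≠ 0 := by positivity
    have key : (‖u ^ n‖₊ : ℝ≥0∞) ≤ (r : ℝ≥0∞) ^ (n : ℝ) := by
      have hone : (1 / (n : ℝ)) * n = 1 := by field_simp
      calc (‖u ^ n‖₊ : ℝ≥0∞) = ((‖u ^ n‖₊ : ℝ≥0∞) ^ (1 / (n : ℝ))) ^ (n : ℝ) := by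
            rw [← ENNReal.rpow_mul, hone, ENNReal.rpow_one]
        _ ≤ (r : ℝ≥0∞) ^ (n : ℝ) := ENNReal.rpow_le_rpow h.le (Nat.cast_nonneg n)
    rw [ENNReal.rpow_natCast, ← ENNReal.coe_pow, ENNReal.coe_le_coe] at key
    have key2 : ‖u ^ n‖ ≤ (r : ℝ) ^ n := by exact_mod_cast key
    rw [hr'def]
    exact key2
  set M : ℝ := 1 + ∑ k ∈ Finset.range N, ‖u ^ k‖ / r' ^ k with hMdef
  have hsum_nonneg : (0 : ℝ) ≤ ∑ k ∈ Finset.range N, ‖u ^ k‖ / r' ^ k :=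
    Finset.sum_nonneg (fun k _ => div_nonneg (norm_nonneg _) (by positivity))
  have hM1 : 1 ≤ M := by rw [hMdef]; linarith
  have hMb : ∀ n, ‖u ^ n‖ ≤ M * r' ^ n := by
    intro n
    rcases lt_or_ge n N with hn | hn
    · have hmem : n ∈ Finset.range N := Finset.mem_range.mpr hn
      have hle : ‖u ^ n‖ / r' ^ n ≤ ∑ k ∈ Finset.range N, ‖u ^ k‖ / r' ^ k :=
        Finset.single_le_sum (fun k _ => div_nonneg (norm_nonneg _) (by positivity)) hmem
      have h2 : ‖u ^ n‖ / r' ^ n ≤ M := by rw [hMdef]; linarith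
      have h3 : (0 : ℝ) < r' ^ n := by positivity
      calc ‖u ^ n‖ = ‖u ^ n‖ / r' ^ n * r' ^ n := by field_simp
        _ ≤ M * r' ^ n := mul_le_mul_of_nonneg_right h2 h3.le
    · calc ‖u ^ n‖ ≤ r' ^ n := hpowN n hn
        _ ≤ M * r' ^ n := by nlinarith [pow_nonneg hr'0.le n]
  -- `v = y - 1` commutes with `u` and has powers of norm at most 1.
  set v : A := y - 1 with hvdef
  have huv : Commute u v := by
    show u * v = v * u
    have e1 : u * v = a * y - a - y + 1 := by rw [hudef, hvdef]; noncomm_ring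
    have e2 : v * u = y * a - y - a + 1 := by rw [hudef, hvdef]; noncomm_ring
    rw [e1, e2, hay]
    abel
  have hvpow : ∀ n, ‖v ^ n‖ ≤ 1 := norm_pow_le_one' hvnorm
  -- Bound on powers of `u + v`.
  have hsum_pow : ∀ n, ‖(u + v) ^ n‖ ≤ M * (r' + 1) ^ n := by
    intro n
    rw [huv.add_pow]
    calc ‖∑ k ∈ Finset.range (n + 1), u ^ k * v ^ (n - k) * (n.choose k : A)‖
        ≤ ∑ k ∈ Finset.range (n + 1), ‖u ^ k * v ^ (n - k) * (n.choose k : A)‖ :=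
          norm_sum_le _ _
      _ ≤ ∑ k ∈ Finset.range (n + 1), M * r' ^ k * (n.choose k : ℝ) := by
          apply Finset.sum_le_sum
          intro k hk
          have b1 : ‖u ^ k * v ^ (n - k) * (n.choose k : A)‖
              ≤ ‖u ^ k‖ * ‖v ^ (n - k)‖ * ‖((n.choose k : ℕ) : A)‖ := by
            calc ‖u ^ k * v ^ (n - k) * (n.choose k : A)‖
                ≤ ‖u ^ k * v ^ (n - k)‖ * ‖((n.choose k : ℕ) : A)‖ := norm_mul_le _ _
              _ ≤ ‖u ^ k‖ * ‖v ^ (n - k)‖ * ‖((n.choose k : ℕ) : A)‖ :=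
                  mul_le_mul_of_nonneg_right (norm_mul_le _ _) (norm_nonneg _)
          have b2 : ‖((n.choose k : ℕ) : A)‖ ≤ (n.choose k : ℝ) := by
            have := Nat.norm_cast_le (α := A) (n.choose k)
            rwa [norm_one, mul_one] at this
          calc ‖u ^ k * v ^ (n - k) * (n.choose k : A)‖
              ≤ ‖u ^ k‖ * ‖v ^ (n - k)‖ * ‖((n.choose k : ℕ) : A)‖ := b1
            _ ≤ (M * r' ^ k) * 1 * (n.choose k : ℝ) := by
                apply mul_le_mul
                · exact mul_le_mul (hMb k) (hvpow (n - k)) (norm_nonneg _)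
                    (by nlinarith [pow_nonneg hr'0.le k])
                · exact b2
                · exact norm_nonneg _
                · nlinarith [pow_nonneg hr'0.le k]
            _ = M * r' ^ k * (n.choose k : ℝ) := by ring
      _ = M * (r' + 1) ^ n := by
          rw [add_pow r' 1 n, Finset.mul_sum]
          apply Finset.sum_congr rfl
          intro k hk
          ring
  -- Invertibility of `a + y`.
  set w : A := (-(2 : ℂ)⁻¹) • (u + v) with hwdef
  set q : ℝ := (r' + 1) / 2 with hqdef
  have hq0 : 0 ≤ q := by rw [hqdef]; linarith
  have hq1 : q < 1 := by rw [hqdef]; linarith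
  have hwpow : ∀ n, ‖w ^ n‖ ≤ M * q ^ n := by
    intro n
    rw [hwdef, smul_pow, norm_smul]
    have e : ‖(-(2 : ℂ)⁻¹) ^ n‖ = (2⁻¹ : ℝ) ^ n := by
      rw [norm_pow, norm_neg, norm_inv]
      norm_num
    rw [e]
    calc (2⁻¹ : ℝ) ^ n * ‖(u + v) ^ n‖ ≤ (2⁻¹ : ℝ) ^ n * (M * (r' + 1) ^ n) := by
          apply mul_le_mul_of_nonneg_left (hsum_pow n) (by positivity)
      _ = M * q ^ n := by rw [hqdef, div_pow, inv_pow]; ring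
  have hws : Summable (fun n => w ^ n) := by
    apply Summable.of_norm_bounded
      ((summable_geometric_of_lt_one hq0 hq1).mul_left M) hwpow
  set z : A := ∑' n, w ^ n with hzdef
  have hz1 : ∑' n, w ^ (n + 1) = z - 1 := by
    have h := Summable.tsum_eq_zero_add hws
    rw [pow_zero] at h
    rw [hzdef, h]
    abel
  have hu1 : (1 - w) * z = 1 := by
    have hmul : w * z = ∑' n, w ^ (n + 1) := by
      rw [hzdef]
      calc w * ∑' n, w ^ n = ∑' n, w * w ^ n := (Summable.tsum_mul_left w hws).symm
        _ = ∑' n, w ^ (n + 1) := by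
            apply tsum_congr
            intro n
            rw [← pow_succ']
    rw [sub_mul, one_mul, hmul, hz1]
    abel
  have hu2 : z * (1 - w) = 1 := by
    have hmul : z * w = ∑' n, w ^ (n + 1) := by
      rw [hzdef]
      calc (∑' n, w ^ n) * w = ∑' n, w ^ n * w := (Summable.tsum_mul_right w hws).symm
        _ = ∑' n, w ^ (n + 1) := by
            apply tsum_congr
            intro n
            rw [← pow_succ]
    rw [mul_sub, mul_one, hmul, hz1]
    abel
  have hone_sub_w : IsUnit (1 - w) := ⟨⟨1 - w, z, hu1, hu2⟩, rfl⟩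
  have hUnit : IsUnit (a + y) := by
    have e : a + y = (2 : ℂ) • (1 - w) := by
      rw [hwdef, smul_sub, smul_smul]
      norm_num
      rw [two_smul' 1, hudef, hvdef]
      noncomm_ring
    rw [e, Algebra.smul_def]
    exact ((isUnit_iff_ne_zero.mpr (two_ne_zero (α := ℂ))).map (algebraMap ℂ A)).mul hone_sub_w
  -- Conclusion.
  have hfinal : (y - a) * (a + y) = 0 := by
    have e : (y - a) * (a + y) = y * a + y * y - a * a - a * y := by noncomm_ring
    rw [e, hsqy, hay]
    abel
  have hsub : y - a = 0 := by
    obtain ⟨U, hU⟩ := hUnit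
    have h := congrArg (· * (↑U⁻¹ : A)) hfinal
    simp only [zero_mul, mul_assoc] at h
    rw [← hU, Units.mul_inv, mul_one] at h
    exact h
  exact (sub_eq_zero.mp hsub).symm
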